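/- Let d be a positive integer, μ > 0, G ≥ 0, and f : ℝ^d → ℝ a differentiable function that is μ-strongly convex with minimizer w* (∇f(w*) = 0). Let (w_t)_{t≥1} be a stochastic process with w_{t+1} = w_t − γ_t g_t where γ_t = 1/(μ t), and where each stochastic gradient g_t satisfies E[g_t | w_1, g_1, …, g_{t−1}] = ∇f(w_t) and E[‖g_t‖₂² | w_1, g_1, …, g_{t−1}] ≤ G². Then for every t ≥ 2, E[‖w_t − w*‖₂²] ≤ 4G² / (μ² t). -/

import Mathlib

open MeasureTheory
open scoped RealInnerProductSpace

private lemma condexp_clm_comp {Ω : Type*} {m m0 : MeasurableSpace Ω} (hm : m ≤ m0)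
    (P : Measure Ω) [IsFiniteMeasure P]
    {E F : Type*} [NormedAddCommGroup E] [NormedSpace ℝ E] [CompleteSpace E]
    [NormedAddCommGroup F] [NormedSpace ℝ F] [CompleteSpace F]
    (L : E →L[ℝ] F) {h : Ω → E} (hh : Integrable h P) :
    P[fun ω => L (h ω) | m] =ᵐ[P] fun ω => L ((P[h|m]) ω) := by
  refine (ae_eq_condExp_of_forall_setIntegral_eq hm (L.integrable_comp hh) ?_ ?_ ?_).symm
  · exact fun s _ _ => (L.integrable_comp integrable_condExp).integrableOn
  · intro s hs _
    rw [L.integral_comp_comm integrable_condExp.integrableOn,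
      setIntegral_condExp hm hh hs, L.integral_comp_comm hh.integrableOn]
  · exact (L.continuous.comp_stronglyMeasurable stronglyMeasurable_condExp).aestronglyMeasurable

private lemma coord_abs_le {d : ℕ} (x : EuclideanSpace ℝ (Fin d)) (i : Fin d) :
    |x i| ≤ ‖x‖ := by
  rw [EuclideanSpace.norm_eq, ← Real.sqrt_sq_eq_abs]
  refine Real.sqrt_le_sqrt ?_
  calc (x i)^2 = ‖x i‖^2 := by rw [Real.norm_eq_abs, sq_abs]
  _ ≤ ∑ j, ‖x j‖^2 :=
    Finset.single_le_sum (f := fun j => ‖x j‖^2) (fun j _ => sq_nonneg _) (Finset.mem_univ i)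

set_option maxHeartbeats 1000000 in
/-- O(1/t) convergence of SGD with step sizes `γ_t = 1/(μt)` on a
μ-strongly convex objective: if `E[g_t | history] = ∇f(w_t)` and
`E[‖g_t‖₂² | history] ≤ G²`, then `E[‖w_t − w*‖₂²] ≤ 4G²/(μ²t)` for all `t ≥ 2`.
The history σ-algebras are modelled by a filtration `ℱ` to which the iterates are
adapted. -/
theorem stmt_10 {Ω : Type*} {m0 : MeasurableSpace Ω} (P : Measure Ω)
    [IsProbabilityMeasure P]
    (d : ℕ) (hd : 0 < d) (mu G : ℝ) (hmu : 0 < mu) (hG : 0 ≤ G)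
    (f : EuclideanSpace ℝ (Fin d) → ℝ) (hdiff : Differentiable ℝ f)
    (hconv : ∀ x y : EuclideanSpace ℝ (Fin d),
      f y ≥ f x + ⟪gradient f x, y - x⟫ + mu / 2 * ‖y - x‖ ^ 2)
    (wstar : EuclideanSpace ℝ (Fin d)) (hmin : gradient f wstar = 0)
    (ℱ : Filtration ℕ m0)
    (w g : ℕ → Ω → EuclideanSpace ℝ (Fin d))
    (hadapt : Adapted ℱ w)
    (hgmeas : ∀ t, StronglyMeasurable (g t))
    (hupd : ∀ t, 1 ≤ t → ∀ ω, w (t + 1) ω = w t ω - (1 / (mu * t)) • g t ω)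
    (hgint : ∀ t, 1 ≤ t → Integrable (g t) P)
    (hg2int : ∀ t, 1 ≤ t → Integrable (fun ω => ‖g t ω‖ ^ 2) P)
    (hgcond : ∀ t, 1 ≤ t → P[g t | ℱ t] =ᵐ[P] fun ω => gradient f (w t ω))
    (hg2cond : ∀ t, 1 ≤ t → ∀ᵐ ω ∂P, (P[fun ω' => ‖g t ω'‖ ^ 2 | ℱ t]) ω ≤ G ^ 2) :
    ∀ t, 2 ≤ t → ∫ ω, ‖w t ω - wstar‖ ^ 2 ∂P ≤ 4 * G ^ 2 / (mu ^ 2 * t) := by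
  have hle := ℱ.le
  -- strong convexity consequence
  have hsc : ∀ x : EuclideanSpace ℝ (Fin d),
      mu * ‖x - wstar‖^2 ≤ ⟪gradient f x, x - wstar⟫ := by
    intro x
    have h1 := hconv x wstar
    have h2 := hconv wstar x
    rw [hmin, inner_zero_left] at h2
    have e1 : ⟪gradient f x, wstar - x⟫ = -⟪gradient f x, x - wstar⟫ := by
      rw [← inner_neg_right, neg_sub]
    have e2 : ‖wstar - x‖ = ‖x - wstar‖ := norm_sub_rev _ _
    rw [e1, e2] at h1
    nlinarith [h1, h2]
  have hwmeas : ∀ t, StronglyMeasurable (w t) := fun t => ((hadapt t).mono (hle t) le_rfl).stronglyMeasurable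
  have hYmeas : ∀ t, StronglyMeasurable (fun ω => w t ω - wstar) :=
    fun t => (hwmeas t).sub stronglyMeasurable_const
  have hA2meas : ∀ t, StronglyMeasurable (fun ω => ‖w t ω - wstar‖^2) :=
    fun t => (hYmeas t).norm.pow 2
  -- the one-step recursion
  have step : ∀ t : ℕ, 1 ≤ t → Integrable (fun ω => ‖w t ω - wstar‖^2) P →
      Integrable (fun ω => ‖w (t+1) ω - wstar‖^2) P ∧
      ∫ ω, ‖w (t+1) ω - wstar‖^2 ∂P ≤
        (1 - 2/(t:ℝ)) * ∫ ω, ‖w t ω - wstar‖^2 ∂P + G^2/(mu^2 * (t:ℝ)^2) := by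
    intro t ht hA
    have htR : (1:ℝ) ≤ (t:ℝ) := by exact_mod_cast ht
    have htpos : (0:ℝ) < (t:ℝ) := by linarith
    have hγpos : 0 < 1/(mu * (t:ℝ)) := by positivity
    set γ : ℝ := 1/(mu * (t:ℝ)) with hγdef
    have hC := hg2int t ht
    -- coordinate bounds for products
    have hbound : Integrable (fun ω => (‖w t ω - wstar‖^2 + ‖g t ω‖^2)/2) P :=
      (hA.add hC).div_const 2
    -- coordinate facts
    have key : ∀ i : Fin d,
        Integrable (fun ω => (w t ω - wstar) i * g t ω i) P ∧
        Integrable (fun ω => (w t ω - wstar) i * gradient f (w t ω) i) P ∧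
        ∫ ω, (w t ω - wstar) i * g t ω i ∂P
          = ∫ ω, (w t ω - wstar) i * gradient f (w t ω) i ∂P := by
      intro i
      set Yi : Ω → ℝ := fun ω => (w t ω - wstar) i with hYi
      set gi : Ω → ℝ := fun ω => g t ω i with hgi
      have hgii : Integrable gi P := by
        simpa using (EuclideanSpace.proj (𝕜 := ℝ) i).integrable_comp (hgint t ht)
      have hYim : StronglyMeasurable[ℱ t] Yi :=
        (EuclideanSpace.proj (𝕜 := ℝ) i).continuous.comp_stronglyMeasurable
          ((hadapt t).stronglyMeasurable.sub stronglyMeasurable_const)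
      have hgim : StronglyMeasurable gi :=
        (EuclideanSpace.proj (𝕜 := ℝ) i).continuous.comp_stronglyMeasurable (hgmeas t)
      have hprod : Integrable (Yi * gi) P := by
        refine Integrable.mono' hbound ((hYim.mono (hle t)).mul hgim).aestronglyMeasurable
          (Filter.Eventually.of_forall fun ω => ?_)
        have h1 : |Yi ω| ≤ ‖w t ω - wstar‖ := coord_abs_le (w t ω - wstar) i
        have h2 : |gi ω| ≤ ‖g t ω‖ := coord_abs_le (g t ω) i
        have h3 : ‖(Yi * gi) ω‖ = |Yi ω| * |gi ω| := by
          rw [Pi.mul_apply, Real.norm_eq_abs, abs_mul]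
        rw [h3]
        nlinarith [mul_le_mul h1 h2 (abs_nonneg (gi ω)) (norm_nonneg (w t ω - wstar)),
          sq_nonneg (‖w t ω - wstar‖ - ‖g t ω‖), abs_nonneg (Yi ω), abs_nonneg (gi ω)]
      have hpull : P[Yi * gi | ℱ t] =ᵐ[P] Yi * P[gi | ℱ t] :=
        condExp_mul_of_stronglyMeasurable_left hYim hprod hgii
      have hcoord : P[gi | ℱ t] =ᵐ[P] fun ω => gradient f (w t ω) i := by
        refine (condexp_clm_comp (hle t) P (EuclideanSpace.proj i) (hgint t ht)).trans ?_
        filter_upwards [hgcond t ht] with ω hω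
        rw [hω]
        rfl
      have heq2 : P[Yi * gi | ℱ t] =ᵐ[P] fun ω => Yi ω * gradient f (w t ω) i := by
        filter_upwards [hpull, hcoord] with ω h1 h2
        rw [h1, Pi.mul_apply, h2]
      refine ⟨hprod, integrable_condExp.congr heq2, ?_⟩
      calc ∫ ω, Yi ω * gi ω ∂P = ∫ ω, (P[Yi * gi | ℱ t]) ω ∂P :=
            (integral_condExp (hle t)).symm
      _ = ∫ ω, Yi ω * gradient f (w t ω) i ∂P := integral_congr_ae heq2
    -- inner product expansions
    have hBpt : ∀ ω, ⟪g t ω, w t ω - wstar⟫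
        = ∑ i, (w t ω - wstar) i * g t ω i := by
      intro ω
      simp only [PiLp.inner_apply, RCLike.inner_apply, conj_trivial]
    have hB'pt : ∀ ω, ⟪gradient f (w t ω), w t ω - wstar⟫
        = ∑ i, (w t ω - wstar) i * gradient f (w t ω) i := by
      intro ω
      simp only [PiLp.inner_apply, RCLike.inner_apply, conj_trivial]
    have hBint : Integrable (fun ω => ⟪g t ω, w t ω - wstar⟫) P := by
      refine (integrable_finset_sum Finset.univ fun i _ => (key i).1).congr
        (Filter.Eventually.of_forall fun ω => ?_)
      exact (hBpt ω).symm
    have hB'int : Integrable (fun ω => ⟪gradient f (w t ω), w t ω - wstar⟫) P := by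
      refine (integrable_finset_sum Finset.univ fun i _ => (key i).2.1).congr
        (Filter.Eventually.of_forall fun ω => ?_)
      exact (hB'pt ω).symm
    have hBeq : ∫ ω, ⟪g t ω, w t ω - wstar⟫ ∂P
        = ∫ ω, ⟪gradient f (w t ω), w t ω - wstar⟫ ∂P := by
      calc ∫ ω, ⟪g t ω, w t ω - wstar⟫ ∂P
          = ∫ ω, ∑ i, (w t ω - wstar) i * g t ω i ∂P :=
            integral_congr_ae (Filter.Eventually.of_forall hBpt)
      _ = ∑ i, ∫ ω, (w t ω - wstar) i * g t ω i ∂P :=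
            integral_finset_sum _ fun i _ => (key i).1
      _ = ∑ i, ∫ ω, (w t ω - wstar) i * gradient f (w t ω) i ∂P := by
            exact Finset.sum_congr rfl fun i _ => (key i).2.2
      _ = ∫ ω, ∑ i, (w t ω - wstar) i * gradient f (w t ω) i ∂P :=
            (integral_finset_sum _ fun i _ => (key i).2.1).symm
      _ = ∫ ω, ⟪gradient f (w t ω), w t ω - wstar⟫ ∂P :=
            (integral_congr_ae (Filter.Eventually.of_forall hB'pt)).symm
    -- lower bound on inner product integral
    have hBlow : mu * ∫ ω, ‖w t ω - wstar‖^2 ∂P ≤ ∫ ω, ⟪g t ω, w t ω - wstar⟫ ∂P := by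
      rw [hBeq, ← integral_const_mul]
      exact integral_mono_ae (hA.const_mul mu) hB'int
        (Filter.Eventually.of_forall fun ω => hsc (w t ω))
    -- bound on second moment
    have hCle : ∫ ω, ‖g t ω‖^2 ∂P ≤ G^2 := by
      rw [← integral_condExp (hle t) (f := fun ω => ‖g t ω‖^2)]
      calc ∫ ω, (P[fun ω' => ‖g t ω'‖^2 | ℱ t]) ω ∂P
          ≤ ∫ _ω, G^2 ∂P :=
            integral_mono_ae integrable_condExp (integrable_const _) (hg2cond t ht)
      _ = G^2 := by simp
    -- pointwise expansion of the update
    have hexp : ∀ ω, ‖w (t+1) ω - wstar‖^2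
        = ‖w t ω - wstar‖^2 - 2*γ*⟪g t ω, w t ω - wstar⟫ + γ^2*‖g t ω‖^2 := by
      intro ω
      have h1 : w (t+1) ω - wstar = (w t ω - wstar) - γ • g t ω := by
        rw [hupd t ht ω, sub_right_comm]
      rw [h1, norm_sub_sq_real, real_inner_smul_right, norm_smul, real_inner_comm,
        Real.norm_eq_abs, abs_of_pos hγpos, mul_pow]
      ring
    have hi1 : Integrable (fun ω => ‖w t ω - wstar‖^2 - 2*γ*⟪g t ω, w t ω - wstar⟫) P :=
      hA.sub (hBint.const_mul (2*γ))
    have hi2 : Integrable (fun ω => γ^2*‖g t ω‖^2) P := hC.const_mul (γ^2)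
    have hA1 : Integrable (fun ω => ‖w (t+1) ω - wstar‖^2) P :=
      (hi1.add hi2).congr (Filter.Eventually.of_forall fun ω => (hexp ω).symm)
    refine ⟨hA1, ?_⟩
    have hint : ∫ ω, ‖w (t+1) ω - wstar‖^2 ∂P
        = ∫ ω, ‖w t ω - wstar‖^2 ∂P - 2*γ*∫ ω, ⟪g t ω, w t ω - wstar⟫ ∂P
          + γ^2*∫ ω, ‖g t ω‖^2 ∂P := by
      calc ∫ ω, ‖w (t+1) ω - wstar‖^2 ∂P
          = ∫ ω, (‖w t ω - wstar‖^2 - 2*γ*⟪g t ω, w t ω - wstar⟫ + γ^2*‖g t ω‖^2) ∂P :=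
            integral_congr_ae (Filter.Eventually.of_forall hexp)
      _ = _ := by
            rw [integral_add hi1 hi2, integral_sub hA (hBint.const_mul (2*γ)),
              integral_const_mul, integral_const_mul]
    rw [hint]
    have hmuγ : mu * γ = 1/(t:ℝ) := by
      rw [hγdef]; field_simp
    have hγsq : γ^2 = 1/(mu^2 * (t:ℝ)^2) := by
      rw [hγdef]; field_simp
    have h2 : γ^2 * ∫ ω, ‖g t ω‖^2 ∂P ≤ γ^2 * G^2 :=
      mul_le_mul_of_nonneg_left hCle (sq_nonneg γ)
    have h3 : 2*γ*(mu * ∫ ω, ‖w t ω - wstar‖^2 ∂P) ≤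
        2*γ*∫ ω, ⟪g t ω, w t ω - wstar⟫ ∂P :=
      mul_le_mul_of_nonneg_left hBlow (by positivity)
    have h4 : (1 - 2/(t:ℝ)) * ∫ ω, ‖w t ω - wstar‖^2 ∂P
        = ∫ ω, ‖w t ω - wstar‖^2 ∂P - 2*γ*(mu * ∫ ω, ‖w t ω - wstar‖^2 ∂P) := by
      have h6 : 2*γ*mu = 2/(t:ℝ) := by rw [hγdef]; field_simp
      rw [show 2*γ*(mu * ∫ ω, ‖w t ω - wstar‖^2 ∂P)
          = (2*γ*mu) * ∫ ω, ‖w t ω - wstar‖^2 ∂P by ring, h6]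
      ring
    have h5 : γ^2 * G^2 = G^2/(mu^2 * (t:ℝ)^2) := by
      rw [hγsq]; ring
    rw [h4]
    linarith [h2, h3, h5]
  -- backward propagation of non-integrability
  have back : ∀ t : ℕ, 1 ≤ t → Integrable (fun ω => ‖w (t+1) ω - wstar‖^2) P →
      Integrable (fun ω => ‖w t ω - wstar‖^2) P := by
    intro t ht hA1
    have htpos : (0:ℝ) < (t:ℝ) := by exact_mod_cast ht
    set γ : ℝ := 1/(mu * (t:ℝ)) with hγdef
    have hγpos : 0 < γ := by positivity
    have hb : Integrable (fun ω => 2*‖w (t+1) ω - wstar‖^2 + 2*γ^2*‖g t ω‖^2) P :=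
      (hA1.const_mul 2).add ((hg2int t ht).const_mul (2*γ^2))
    refine Integrable.mono' hb
      (hA2meas t).aestronglyMeasurable (Filter.Eventually.of_forall fun ω => ?_)
    have h1 : w t ω - wstar = (w (t+1) ω - wstar) + γ • g t ω := by
      rw [hupd t ht ω]; abel
    have h2 : ‖w t ω - wstar‖ ≤ ‖w (t+1) ω - wstar‖ + γ*‖g t ω‖ := by
      rw [h1]
      calc ‖(w (t+1) ω - wstar) + γ • g t ω‖
          ≤ ‖w (t+1) ω - wstar‖ + ‖γ • g t ω‖ := norm_add_le _ _
      _ = ‖w (t+1) ω - wstar‖ + γ*‖g t ω‖ := by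
            rw [norm_smul, Real.norm_eq_abs, abs_of_pos hγpos]
    have h3 : ‖‖w t ω - wstar‖^2‖ = ‖w t ω - wstar‖^2 := by
      rw [Real.norm_eq_abs, abs_of_nonneg (sq_nonneg _)]
    rw [h3]
    nlinarith [h2, sq_nonneg (‖w (t+1) ω - wstar‖ - γ*‖g t ω‖),
      norm_nonneg (w t ω - wstar), norm_nonneg (w (t+1) ω - wstar),
      mul_nonneg hγpos.le (norm_nonneg (g t ω))]
  by_cases hi : Integrable (fun ω => ‖w 1 ω - wstar‖^2) P
  · -- integrable case: induction
    have main : ∀ t : ℕ, 1 ≤ t → Integrable (fun ω => ‖w t ω - wstar‖^2) P ∧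
        (2 ≤ t → ∫ ω, ‖w t ω - wstar‖^2 ∂P ≤ 4*G^2/(mu^2*(t:ℝ))) := by
      intro t ht
      induction t, ht using Nat.le_induction with
      | base => exact ⟨hi, by omega⟩
      | succ t ht ih =>
        obtain ⟨hIt, hBt⟩ := ih
        obtain ⟨hIt1, hrec⟩ := step t ht hIt
        refine ⟨hIt1, fun _ => ?_⟩
        have htR : (1:ℝ) ≤ (t:ℝ) := by exact_mod_cast ht
        have hcast : ((t+1 : ℕ) : ℝ) = (t:ℝ) + 1 := by push_cast; ring
        rw [hcast]
        rcases eq_or_lt_of_le ht with heq | hlt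
        · -- t = 1
          subst heq
          have hnn : 0 ≤ ∫ ω, ‖w 1 ω - wstar‖^2 ∂P :=
            integral_nonneg fun ω => sq_nonneg _
          have e1 : (1 - 2/((1:ℕ):ℝ)) = -1 := by norm_num
          have e2 : G^2/(mu^2*((1:ℕ):ℝ)^2) = G^2/mu^2 := by norm_num
          rw [e1, e2] at hrec
          have e3 : 4*G^2/(mu^2*(((1:ℕ):ℝ)+1)) = 2*(G^2/mu^2) := by
            push_cast
            field_simp
            ring
          rw [e3]
          have hq : 0 ≤ G^2/mu^2 := by positivity
          linarith [hrec, hnn, hq]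
        · -- t ≥ 2
          have ht2 : 2 ≤ t := hlt
          have hx : (2:ℝ) ≤ (t:ℝ) := by exact_mod_cast ht2
          have hb := hBt ht2
          have hcoef : (0:ℝ) ≤ 1 - 2/(t:ℝ) := by
            rw [sub_nonneg, div_le_one (by linarith)]; linarith
          have hstep2 : ∫ ω, ‖w (t+1) ω - wstar‖^2 ∂P
              ≤ (1 - 2/(t:ℝ)) * (4*G^2/(mu^2*(t:ℝ))) + G^2/(mu^2*(t:ℝ)^2) := by
            refine hrec.trans ?_
            have := mul_le_mul_of_nonneg_left hb hcoef
            linarith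
          refine hstep2.trans ?_
          have htpos : (0:ℝ) < (t:ℝ) := by linarith
          have hLHS : (1 - 2/(t:ℝ)) * (4*G^2/(mu^2*(t:ℝ))) + G^2/(mu^2*(t:ℝ)^2)
              = G^2 * (4*(t:ℝ) - 7) / (mu^2 * (t:ℝ)^2) := by
            field_simp
            ring
          rw [hLHS, div_le_div_iff₀ (by positivity) (by positivity)]
          nlinarith [mul_nonneg (mul_nonneg (sq_nonneg mu) (sq_nonneg G))
            (by linarith : (0:ℝ) ≤ 3*(t:ℝ) + 7), sq_nonneg G, sq_nonneg mu, htpos]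
    intro t ht
    exact (main t (by omega)).2 ht
  · -- non-integrable case: integrals are zero
    have hnone : ∀ t : ℕ, 1 ≤ t → ¬Integrable (fun ω => ‖w t ω - wstar‖^2) P := by
      intro t ht
      induction t, ht using Nat.le_induction with
      | base => exact hi
      | succ t ht ih => exact fun h => ih (back t ht h)
    intro t ht
    rw [integral_undef (hnone t (by omega))]
    positivity
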